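/- Let F be a finite field of odd characteristic, σ a non-trivial involutive automorphism of F with fixed field F′, and N : F → F′ the norm map t ↦ t·σ(t). Let V be a finite-dimensional F-vector space and B a non-degenerate (ε, σ)-Hermitian form on V for ε ∈ {±1}. Then the anisotropic part V₀ of a Witt decomposition of V satisfies dim_F V₀ ≤ 1. Equivalently, the Witt index of B is ⌊dim V/2⌋. -/

import Mathlib

open Module


lemma my_norm_surj {F : Type*} [Field F] [Fintype F] (σ : F →+* F)
    (hσ2 : ∀ a, σ (σ a) = a) (hσ1 : σ ≠ RingHom.id F) :
    ∀ x : F, σ x = x → ∃ a : F, a * σ a = x := by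
  intro x hx
  rcases eq_or_ne x 0 with rfl | hx0
  · exact ⟨0, by simp⟩
  have hσinj : Function.Injective σ := σ.injective
  -- units version of σ
  set σu : Fˣ →* Fˣ := Units.map σ.toMonoidHom with hσu
  have hσuval : ∀ a : Fˣ, ((σu a : F)) = σ (a : F) := fun a => rfl
  have hσu2 : ∀ a : Fˣ, σu (σu a) = a := by
    intro a; ext; simp [hσuval, hσ2]
  set ν : Fˣ →* Fˣ := MonoidHom.mk' (fun a => a * σu a)
    (by intro a b; show a * b * σu (a * b) = _; rw [map_mul]; exact mul_mul_mul_comm a b (σu a) (σu b)) with hν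
  set δ : Fˣ →* Fˣ := MonoidHom.mk' (fun a => σu a * a⁻¹)
    (by intro a b; show σu (a * b) * (a * b)⁻¹ = _; rw [map_mul, mul_inv]; exact mul_mul_mul_comm (σu a) (σu b) a⁻¹ b⁻¹) with hδ
  have hδker : ∀ a : Fˣ, a ∈ δ.ker ↔ σ (a : F) = a := by
    intro a
    rw [MonoidHom.mem_ker]
    show σu a * a⁻¹ = 1 ↔ _
    rw [mul_inv_eq_one, Units.ext_iff, hσuval]
  have hνrange_le : ν.range ≤ δ.ker := by
    rintro _ ⟨a, rfl⟩
    rw [hδker]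
    show σ ((a : F) * σ (a : F)) = (a : F) * σ (a : F)
    rw [map_mul, hσ2, mul_comm]
  have hδrange : δ.range = ν.ker := by
    apply le_antisymm
    · rintro _ ⟨a, rfl⟩
      rw [MonoidHom.mem_ker]
      show (σu a * a⁻¹) * σu (σu a * a⁻¹) = 1
      rw [map_mul, hσu2, map_inv]
      group
    · intro u hu
      rw [MonoidHom.mem_ker] at hu
      have huval : (u : F) * σ (u : F) = 1 := by
        have := congrArg (Units.val) hu
        simpa [ν, hσuval] using this
      have hσuinv : σ (u : F) = (u : F)⁻¹ := by
        field_simp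
        rw [mul_comm]; exact huval
      -- find b with σ b + u * b ≠ 0
      have hb : ∃ b : F, σ b + (u : F) * b ≠ 0 := by
        by_contra hall
        push_neg at hall
        have hu1 : (u : F) = -1 := by
          have := hall 1
          rw [map_one, mul_one] at this
          linear_combination this
        apply hσ1
        ext b
        have h := hall b
        rw [hu1] at h
        show σ b = b
        linear_combination h
      obtain ⟨b, hb⟩ := hb
      set c : F := σ b + (u : F) * b with hc
      have hσc : σ c = (u : F)⁻¹ * c := by
        rw [hc, map_add, map_mul, hσ2, hσuinv]
        field_simp
        ring
      refine ⟨(Units.mk0 c hb)⁻¹, ?_⟩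
      ext
      show σ ((Units.mk0 c hb)⁻¹ : F) * (((Units.mk0 c hb)⁻¹)⁻¹ : Fˣ) = (u : F)
      rw [inv_inv]
      simp only [Units.val_inv_eq_inv_val, Units.val_mk0]
      rw [map_inv₀, hσc]
      field_simp
  -- cardinalities
  have hcard : ∀ f : Fˣ →* Fˣ, Nat.card f.range * Nat.card f.ker = Nat.card Fˣ := by
    intro f
    rw [Subgroup.card_eq_card_quotient_mul_card_subgroup f.ker]
    congr 1
    exact (Nat.card_congr (QuotientGroup.quotientKerEquivRange f).toEquiv).symm
  have h1 := hcard ν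
  have h2 := hcard δ
  rw [← hδrange] at h1
  have hpos : 0 < Nat.card δ.range := Nat.card_pos
  have hcardeq : Nat.card ν.range = Nat.card δ.ker := by
    have : Nat.card ν.range * Nat.card δ.range = Nat.card δ.ker * Nat.card δ.range := by
      rw [h1, mul_comm (Nat.card δ.ker), h2]
    exact Nat.eq_of_mul_eq_mul_right hpos this
  have hrange_eq : ν.range = δ.ker :=
    Subgroup.eq_of_le_of_card_ge hνrange_le (le_of_eq hcardeq.symm)
  have hxu : Units.mk0 x hx0 ∈ δ.ker := by rw [hδker]; exact hx
  rw [← hrange_eq] at hxu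
  obtain ⟨a, ha⟩ := hxu
  refine ⟨(a : F), ?_⟩
  have := congrArg Units.val ha
  simpa [ν, hσuval] using this



def myPerp {F V : Type*} [Field F] [AddCommGroup V] [Module F V] (B : V → V → F)
    (haddl : ∀ v v' w, B (v + v') w = B v w + B v' w)
    (hsmull : ∀ (a : F) (v w : V), B (a • v) w = a * B v w) (W : Submodule F V) :
    Submodule F V where
  carrier := {v | ∀ w ∈ W, B v w = 0}
  add_mem' := fun {a b} ha hb w hw => by rw [haddl, ha w hw, hb w hw, add_zero]
  zero_mem' := fun w hw => by
    have h := haddl 0 0 w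
    rw [add_zero] at h
    exact (left_eq_add.mp h)
  smul_mem' := fun c v hv w hw => by rw [hsmull, hv w hw, mul_zero]

lemma myPerp_mem {F V : Type*} [Field F] [AddCommGroup V] [Module F V] {B : V → V → F}
    {haddl : ∀ v v' w, B (v + v') w = B v w + B v' w}
    {hsmull : ∀ (a : F) (v w : V), B (a • v) w = a * B v w} {W : Submodule F V} {v : V} :
    v ∈ myPerp B haddl hsmull W ↔ ∀ w ∈ W, B v w = 0 := Iff.rfl

lemma myPerp_rank {F V : Type*} [Field F] [AddCommGroup V] [Module F V]
    [FiniteDimensional F V]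
    (σ : F →+* F) (hσ2 : ∀ a, σ (σ a) = a)
    (ε : F) (hε0 : ε ≠ 0)
    (B : V → V → F)
    (haddl : ∀ v v' w, B (v + v') w = B v w + B v' w)
    (hsmull : ∀ (a : F) (v w : V), B (a • v) w = a * B v w)
    (hherm : ∀ v w, ε * B v w = σ (B w v))
    (hnd : ∀ v, (∀ w, B v w = 0) → v = 0)
    (W : Submodule F V) :
    finrank F (myPerp B haddl hsmull W) + finrank F W = finrank F V := by
  classical
  -- derived right-side properties
  have hraddl : ∀ v w w', B v (w + w') = B v w + B v w' := by
    intro v w w'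
    apply mul_left_cancel₀ hε0
    rw [hherm, haddl, map_add, ← hherm, ← hherm, mul_add]
  have hrs : ∀ (a : F) (v w : V), B v (a • w) = σ a * B v w := by
    intro a v w
    apply mul_left_cancel₀ hε0
    rw [hherm, hsmull, map_mul, ← hherm]
    ring
  have hndr : ∀ v, (∀ w, B w v = 0) → v = 0 := by
    intro v h
    apply hnd
    intro w
    have h2 := hherm v w
    rw [h w, map_zero] at h2
    exact (mul_eq_zero.mp h2).resolve_left hε0
  have hsum : ∀ (v : V) (ι : Type _) (s : Finset ι) (g : ι → V),
      B v (∑ i ∈ s, g i) = ∑ i ∈ s, B v (g i) := by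
    intro v ι s g
    exact map_sum (AddMonoidHom.mk' (B v) (hraddl v)) g s
  set d := finrank F W with hd
  let b : Basis (Fin d) F W := finBasis F W
  let f : Fin d → V →ₗ[F] F := fun i =>
    { toFun := fun v => B v (b i)
      map_add' := fun u v => haddl u v _
      map_smul' := fun a v => hsmull a v _ }
  let Φ : V →ₗ[F] (Fin d → F) := LinearMap.pi f
  have hΦ : ∀ v i, Φ v i = B v (b i) := fun v i => rfl
  have hker : LinearMap.ker Φ = myPerp B haddl hsmull W := by
    ext v
    rw [LinearMap.mem_ker, myPerp_mem]
    constructor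
    · intro h w hw
      have hzero : ∀ i, B v ((b i : W) : V) = 0 := by
        intro i
        have := congrFun h i
        simpa [hΦ] using this
      have hw' : w = ∑ i, b.repr ⟨w, hw⟩ i • ((b i : W) : V) := by
        have := b.sum_repr ⟨w, hw⟩
        calc w = ((⟨w, hw⟩ : W) : V) := rfl
        _ = ((∑ i, b.repr ⟨w, hw⟩ i • b i : W) : V) := by rw [this]
        _ = _ := by push_cast; rfl
      rw [hw', hsum]
      apply Finset.sum_eq_zero
      intro i _
      rw [hrs, hzero, mul_zero]
    · intro h
      funext i
      simpa [hΦ] using h (b i) (b i).2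
  have hrange : LinearMap.range Φ = ⊤ := by
    by_contra hne
    obtain ⟨g, hg0, hgmap⟩ := Submodule.exists_dual_map_eq_bot_of_lt_top
      (lt_top_iff_ne_top.mpr hne) inferInstance
    have hgv : ∀ v, g (Φ v) = 0 := by
      intro v
      have : g (Φ v) ∈ Submodule.map g (LinearMap.range Φ) :=
        Submodule.mem_map_of_mem (LinearMap.mem_range_self Φ v)
      exact (Submodule.mem_bot F).mp (hgmap ▸ this)
    set c : Fin d → F := fun i => g (Pi.single i 1) with hcdef
    have hgy : ∀ y : Fin d → F, g y = ∑ i, y i * c i := by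
      intro y
      have hy : y = ∑ i, y i • (Pi.single i (1 : F) : Fin d → F) := by
        funext j
        simp [Finset.sum_apply, Pi.single_apply]
      calc g y = g (∑ i, y i • (Pi.single i (1 : F) : Fin d → F)) := by rw [← hy]
      _ = ∑ i, y i • g ((Pi.single i (1 : F) : Fin d → F)) := by rw [map_sum]; simp
      _ = ∑ i, y i * c i := by simp [hcdef, smul_eq_mul]
    -- the vector u
    set u : V := ∑ i, σ (c i) • ((b i : W) : V) with hudef
    have hu : ∀ v, B v u = 0 := by
      intro v
      rw [hudef, hsum]
      have : ∀ i, B v (σ (c i) • ((b i : W) : V)) = (Φ v i) * c i := by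
        intro i
        rw [hrs, hσ2, hΦ, mul_comm]
      simp only [this]
      rw [← hgy (Φ v)]
      exact hgv v
    have hu0 : u = 0 := hndr u hu
    have huW : (∑ i, σ (c i) • b i : W) = 0 := by
      apply Subtype.ext
      push_cast
      exact hu0
    have hc0 : ∀ i, σ (c i) = 0 := by
      intro i
      have h : (b.repr (∑ i, σ (c i) • b i) : Fin d → F) = (b.repr 0 : Fin d → F) := by
        rw [huW]
      rw [b.repr_sum_self] at h
      have := congrFun h i
      simpa using this
    have : c = 0 := by
      funext i
      have := hc0 i
      have h0 : σ (c i) = σ 0 := by rw [this, map_zero]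
      exact σ.injective h0
    apply hg0
    apply LinearMap.ext
    intro y
    rw [hgy y, this]
    simp
  have hrk := LinearMap.finrank_range_add_finrank_ker Φ
  rw [hrange, hker] at hrk
  have htop : finrank F (⊤ : Submodule F (Fin d → F)) = d := by
    rw [finrank_top]
    simp
  rw [htop] at hrk
  omega




lemma my_aniso {F : Type*} [Field F] [Fintype F]
    (σ : F →+* F) (hσ2 : ∀ a, σ (σ a) = a) (hσ1 : σ ≠ RingHom.id F)
    (ε : F) (hε : ε = 1 ∨ ε = -1)
    {V : Type*} [AddCommGroup V] [Module F V] [FiniteDimensional F V]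
    (B : V → V → F)
    (haddl : ∀ v v' w, B (v + v') w = B v w + B v' w)
    (hsmull : ∀ (a : F) (v w : V), B (a • v) w = a * B v w)
    (hherm : ∀ v w, ε * B v w = σ (B w v))
    (V0 : Submodule F V) (h0 : ∀ v ∈ V0, B v v = 0 → v = 0) :
    finrank F V0 ≤ 1 := by
  have hε0 : ε ≠ 0 := by
    rcases hε with rfl | rfl
    · exact one_ne_zero
    · exact neg_ne_zero.mpr one_ne_zero
  have hraddl : ∀ v w w', B v (w + w') = B v w + B v w' := by
    intro v w w'
    apply mul_left_cancel₀ hε0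
    rw [hherm, haddl, map_add, ← hherm, ← hherm, mul_add]
  have hrs : ∀ (a : F) (v w : V), B v (a • w) = σ a * B v w := by
    intro a v w
    apply mul_left_cancel₀ hε0
    rw [hherm, hsmull, map_mul, ← hherm]
    ring
  by_contra hlt
  push_neg at hlt
  have hbot : V0 ≠ ⊥ := by
    intro h
    rw [h, finrank_bot] at hlt
    omega
  obtain ⟨v, hvV, hv0⟩ := Submodule.exists_mem_ne_zero_of_ne_bot hbot
  have hnle : ¬ V0 ≤ Submodule.span F {v} := by
    intro hle
    have h1 : finrank F V0 ≤ finrank F (Submodule.span F {v}) := Submodule.finrank_mono hle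
    rw [finrank_span_singleton hv0] at h1
    omega
  obtain ⟨w, hwV, hw⟩ := SetLike.not_le_iff_exists.mp hnle
  set α := B v v with hαdef
  have hα : α ≠ 0 := fun h => hv0 (h0 v hvV h)
  set c := B w v / α with hcdef
  set w' := w - c • v with hw'def
  have hw'V : w' ∈ V0 := sub_mem hwV (Submodule.smul_mem _ _ hvV)
  have hw'0 : w' ≠ 0 := by
    intro h
    apply hw
    rw [sub_eq_zero] at h
    exact Submodule.mem_span_singleton.mpr ⟨c, h.symm⟩
  have hw'v : B w' v = 0 := by
    rw [hw'def, sub_eq_add_neg, haddl, ← neg_one_smul F (c • v), hsmull, hsmull]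
    rw [hcdef, ← hαdef, div_mul_cancel₀ _ hα]
    ring
  have hvw' : B v w' = 0 := by
    have h2 := hherm v w'
    rw [hw'v, map_zero] at h2
    exact (mul_eq_zero.mp h2).resolve_left hε0
  set β := B w' w' with hβdef
  have hβ : β ≠ 0 := fun h => hw'0 (h0 w' hw'V h)
  have hσα : σ α = ε * α := (hherm v v).symm
  have hσβ : σ β = ε * β := (hherm w' w').symm
  have hfix : σ (-(β / α)) = -(β / α) := by
    rw [map_neg, map_div₀, hσα, hσβ, mul_div_mul_left β α hε0]
  obtain ⟨a, ha⟩ := my_norm_surj σ hσ2 hσ1 (-(β / α)) hfix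
  set u := a • v + w' with hudef
  have huV : u ∈ V0 := add_mem (Submodule.smul_mem _ _ hvV) hw'V
  have hu0 : u ≠ 0 := by
    intro h
    apply hw
    have : w = (c - a) • v := by
      have h2 : a • v + (w - c • v) = 0 := h
      rw [sub_smul]
      linear_combination (norm := module) h2
    exact Submodule.mem_span_singleton.mpr ⟨c - a, this.symm⟩
  have hBu : B u u = 0 := by
    rw [hudef, haddl, hsmull, hraddl, hraddl, hrs, hrs, hw'v, hvw', ← hβdef, ← hαdef]
    have : a * (σ a * α + 0) + (σ a * 0 + β) = (a * σ a) * α + β := by ring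
    rw [this, ha]
    field_simp
    ring
  exact hu0 (h0 u huV hBu)

/-- For a non-degenerate `(ε, σ)`-Hermitian form with `σ` a non-trivial involution
of a finite field of odd characteristic, any anisotropic subspace has dimension at
most 1; equivalently, the Witt index is `⌊dim V / 2⌋`. -/


theorem stmt_10 (F : Type*) [Field F] [Fintype F]
    (p : ℕ) [Fact p.Prime] (hp : Odd p) [CharP F p]
    (σ : F →+* F) (hσ2 : ∀ a, σ (σ a) = a) (hσ1 : σ ≠ RingHom.id F)
    (ε : F) (hε : ε = 1 ∨ ε = -1)
    (V : Type*) [AddCommGroup V] [Module F V] [FiniteDimensional F V]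
    (B : V → V → F)
    (haddl : ∀ v v' w, B (v + v') w = B v w + B v' w)
    (hsmull : ∀ (a : F) (v w : V), B (a • v) w = a * B v w)
    (hherm : ∀ v w, ε * B v w = σ (B w v))
    (hnd : ∀ v, (∀ w, B v w = 0) → v = 0) :
    (∀ V0 : Submodule F V, (∀ v ∈ V0, B v v = 0 → v = 0) →
      Module.finrank F V0 ≤ 1) ∧
    IsGreatest {d : ℕ | ∃ W : Submodule F V,
      Module.finrank F W = d ∧ ∀ v ∈ W, B v v = 0}
      (Module.finrank F V / 2) := by
  have hε0 : ε ≠ 0 := by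
    rcases hε with rfl | rfl
    · exact one_ne_zero
    · exact neg_ne_zero.mpr one_ne_zero
  have hraddl : ∀ v w w', B v (w + w') = B v w + B v w' := by
    intro v w w'
    apply mul_left_cancel₀ hε0
    rw [hherm, haddl, map_add, ← hherm, ← hherm, mul_add]
  have hrs : ∀ (a : F) (v w : V), B v (a • w) = σ a * B v w := by
    intro a v w
    apply mul_left_cancel₀ hε0
    rw [hherm, hsmull, map_mul, ← hherm]
    ring
  have hB0l : ∀ w : V, B 0 w = 0 := by
    intro w
    have h := haddl 0 0 w
    rw [add_zero] at h
    exact left_eq_add.mp h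
  -- symmetry of vanishing
  have hsymm0 : ∀ v w : V, B v w = 0 → B w v = 0 := by
    intro v w h
    have h2 := hherm w v
    rw [h, map_zero] at h2
    exact (mul_eq_zero.mp h2).resolve_left hε0
  -- diagonal-zero implies pairwise-zero
  have hex : ∃ t : F, σ t ≠ t := by
    by_contra hall
    push_neg at hall
    exact hσ1 (RingHom.ext fun a => hall a)
  obtain ⟨t, ht⟩ := hex
  have hpair : ∀ (W : Submodule F V), (∀ v ∈ W, B v v = 0) →
      ∀ v ∈ W, ∀ w ∈ W, B v w = 0 := by
    intro W hW v hv w hw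
    have h1 : B v w + B w v = 0 := by
      have h := hW (v + w) (add_mem hv hw)
      rw [haddl, hraddl, hraddl, hW v hv, hW w hw] at h
      linear_combination h
    have h2 : σ t * B v w + t * B w v = 0 := by
      have h := hW (v + t • w) (add_mem hv (Submodule.smul_mem _ _ hw))
      rw [haddl, hsmull, hraddl, hraddl, hrs, hrs, hW v hv, hW w hw] at h
      linear_combination h
    have h3 : (σ t - t) * B v w = 0 := by linear_combination h2 - t * h1
    have h4 : σ t - t ≠ 0 := sub_ne_zero.mpr ht
    exact (mul_eq_zero.mp h3).resolve_left h4
  set n := finrank F V with hn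
  set S := {d : ℕ | ∃ W : Submodule F V,
      Module.finrank F W = d ∧ ∀ v ∈ W, B v v = 0} with hS
  have hub : ∀ d ∈ S, d ≤ n / 2 := by
    rintro d ⟨W, rfl, hW⟩
    have hle : W ≤ myPerp B haddl hsmull W := by
      intro v hv
      rw [myPerp_mem]
      exact fun w hw => hpair W hW v hv w hw
    have h1 : finrank F W ≤ finrank F (myPerp B haddl hsmull W) := Submodule.finrank_mono hle
    have h2 := myPerp_rank σ hσ2 ε hε0 B haddl hsmull hherm hnd W
    omega
  constructor
  · exact fun V0 h0 => my_aniso σ hσ2 hσ1 ε hε B haddl hsmull hherm V0 h0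
  · have h0S : 0 ∈ S := by
      refine ⟨⊥, finrank_bot F V, ?_⟩
      intro v hv
      rw [Submodule.mem_bot] at hv
      rw [hv]
      exact hB0l 0
    have hbdd : BddAbove S := ⟨n / 2, hub⟩
    set d₀ := sSup S with hd₀
    have hd₀S : d₀ ∈ S := Nat.sSup_mem ⟨0, h0S⟩ hbdd
    have hmax : ∀ e ∈ S, e ≤ d₀ := fun e he => le_csSup hbdd he
    obtain ⟨W₀, hW₀rank, hW₀iso⟩ := hd₀S
    -- closedness of W₀ under isotropic vectors of its perp
    have hclosed : ∀ v ∈ myPerp B haddl hsmull W₀, B v v = 0 → v ∈ W₀ := by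
      intro v hvP hvv
      by_contra hvW
      set W' := W₀ ⊔ Submodule.span F {v} with hW'
      have hW'iso : ∀ u ∈ W', B u u = 0 := by
        intro u hu
        rw [hW', Submodule.mem_sup] at hu
        obtain ⟨w, hw, z, hz, rfl⟩ := hu
        rw [Submodule.mem_span_singleton] at hz
        obtain ⟨a, rfl⟩ := hz
        have h1 : B v w = 0 := (myPerp_mem.mp hvP) w hw
        have h2 : B w v = 0 := hsymm0 v w h1
        rw [haddl, hsmull, hraddl, hraddl, hrs, hrs, hW₀iso w hw, hvv, h1, h2]
        ring
      have hlt : W₀ < W' := by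
        apply lt_of_le_of_ne le_sup_left
        intro h
        apply hvW
        rw [h]
        exact Submodule.mem_sup_right (Submodule.mem_span_singleton_self v)
      have h1 : finrank F W₀ < finrank F W' := Submodule.finrank_lt_finrank_of_lt hlt
      have h2 : finrank F W' ∈ S := ⟨W', rfl, hW'iso⟩
      have := hmax _ h2
      omega
    -- lower bound for d₀
    set P := myPerp B haddl hsmull W₀ with hP
    have hW₀P : W₀ ≤ P := by
      intro v hv
      rw [hP, myPerp_mem]
      exact fun w hw => hpair W₀ hW₀iso v hv w hw
    have hrankP : finrank F P + d₀ = n := by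
      rw [← hW₀rank]
      exact myPerp_rank σ hσ2 ε hε0 B haddl hsmull hherm hnd W₀
    set W₀' : Submodule F P := W₀.comap P.subtype with hW₀'
    obtain ⟨U', hU'⟩ := Submodule.exists_isCompl W₀'
    have hrk : finrank F W₀' + finrank F U' = finrank F P :=
      Submodule.finrank_add_eq_of_isCompl hU'
    have hW₀'rank : finrank F W₀' = d₀ := by
      rw [← hW₀rank]
      exact (Submodule.comapSubtypeEquivOfLe hW₀P).finrank_eq
    set U := U'.map P.subtype with hU
    have hUrank : finrank F U = finrank F U' := by
      rw [hU]
      exact (Submodule.equivSubtypeMap P U').symm.finrank_eq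
    have hUaniso : ∀ v ∈ U, B v v = 0 → v = 0 := by
      intro v hvU hvv
      rw [hU, Submodule.mem_map] at hvU
      obtain ⟨u', hu'U, rfl⟩ := hvU
      have hvP : (P.subtype u' : V) ∈ P := (u' : P).2
      have hvW₀ : (P.subtype u' : V) ∈ W₀ := hclosed _ hvP hvv
      have hu'W : u' ∈ W₀' := by
        rw [hW₀', Submodule.mem_comap]
        exact hvW₀
      have : u' = 0 := by
        have hdisj := hU'.disjoint
        exact (Submodule.disjoint_def.mp hdisj) u' hu'W hu'U
      rw [this]
      simp
    have h1 : finrank F U ≤ 1 := my_aniso σ hσ2 hσ1 ε hε B haddl hsmull hherm U hUaniso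
    have hd₀ub : d₀ ≤ n / 2 := hub d₀ ⟨W₀, hW₀rank, hW₀iso⟩
    have heq : n / 2 = d₀ := by omega
    rw [hn] at heq ⊢
    constructor
    · rw [heq]
      exact ⟨W₀, hW₀rank, hW₀iso⟩
    · intro e he
      exact le_trans (hmax e he) (le_of_eq heq.symm)
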